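/- Let T be a tree rooted at r with heavy child u, and suppose c is the unique colour in L(r) such that T − T_u admits an L-colouring assigning c to r. Then T admits an L-colouring if and only if T_u admits an L-colouring in which the root u does not receive colour c. -/

import Mathlib

/-- Rooted trees with vertices labelled by elements of `V`; the children are
given as an ordered list. -/
inductive LTree (V : Type) : Type where
  | node : V → List (LTree V) → LTree V

/-- The root (label) of a labelled rooted tree. -/
def LTree.root {V : Type} : LTree V → V
  | .node v _ => v

mutual
  /-- `LTree.Colors L c t` : the assignment `c` is a proper `L`-colouring of the
  tree `t`, i.e. every vertex gets a colour from its list and adjacent vertices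
  (parent/child pairs) get distinct colours. -/
  def LTree.Colors {V : Type} (L : V → Finset ℕ) (c : V → ℕ) : LTree V → Prop
    | .node v cs => c v ∈ L v ∧ (∀ t ∈ cs, c t.root ≠ c v) ∧ LTree.ColorsList L c cs
  def LTree.ColorsList {V : Type} (L : V → Finset ℕ) (c : V → ℕ) : List (LTree V) → Prop
    | [] => True
    | t :: ts => LTree.Colors L c t ∧ LTree.ColorsList L c ts
end

mutual
  /-- The list of labels of the vertices of a labelled rooted tree. -/
  def LTree.labels {V : Type} : LTree V → List V
    | .node v cs => v :: LTree.labelsList cs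
  def LTree.labelsList {V : Type} : List (LTree V) → List V
    | [] => []
    | t :: ts => LTree.labels t ++ LTree.labelsList ts
end

mutual
  /-- Number of vertices of a labelled rooted tree. -/
  def LTree.size {V : Type} : LTree V → ℕ
    | .node _ cs => 1 + LTree.sizeList cs
  def LTree.sizeList {V : Type} : List (LTree V) → ℕ
    | [] => 0
    | t :: ts => LTree.size t + LTree.sizeList ts
end

/-- The `i`th child in the list `cs` of children subtrees is *heavy* if its
subtree is at least as large as every other child's subtree, with strict
inequality for children preceding it in the order. -/
def LHeavyIdx {V : Type} (cs : List (LTree V)) (i : Fin cs.length) : Prop :=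
  ∀ j : Fin cs.length,
    (cs.get j).size ≤ (cs.get i).size ∧ (j < i → (cs.get j).size < (cs.get i).size)

theorem LTree.colorsList_iff_forall {V : Type} (L : V → Finset ℕ) (c : V → ℕ) :
    ∀ l : List (LTree V), LTree.ColorsList L c l ↔ ∀ t ∈ l, LTree.Colors L c t
  | [] => by simp [LTree.ColorsList]
  | t :: ts => by
      simp [LTree.ColorsList, LTree.colorsList_iff_forall L c ts]

theorem LTree.root_mem_labels {V : Type} (t : LTree V) : t.root ∈ t.labels := by
  cases t with
  | node v cs => simp [LTree.root, LTree.labels]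

theorem LTree.labels_subset {V : Type} :
    ∀ (l : List (LTree V)), ∀ t ∈ l, ∀ v ∈ t.labels, v ∈ LTree.labelsList l
  | [] => by simp
  | t :: ts => by
    intro s hs v hv
    simp only [LTree.labelsList, List.mem_append]
    rcases List.mem_cons.1 hs with rfl | hs
    · exact Or.inl hv
    · exact Or.inr (LTree.labels_subset ts s hs v hv)

theorem LTree.labelsList_append {V : Type} :
    ∀ (l1 l2 : List (LTree V)),
      LTree.labelsList (l1 ++ l2) = LTree.labelsList l1 ++ LTree.labelsList l2
  | [], l2 => by simp [LTree.labelsList]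
  | t :: ts, l2 => by
      simp [LTree.labelsList, LTree.labelsList_append ts l2]

mutual
theorem LTree.colors_congr {V : Type} {L : V → Finset ℕ} {c c' : V → ℕ} :
    ∀ t : LTree V, (∀ v ∈ t.labels, c v = c' v) → LTree.Colors L c t →
      LTree.Colors L c' t
  | .node v cs => fun h hc => by
      obtain ⟨h1, h2, h3⟩ := hc
      have hv : c v = c' v := h v (by simp [LTree.labels])
      refine ⟨hv ▸ h1, fun t ht => ?_, ?_⟩
      · have hr : c t.root = c' t.root :=
          h t.root (by
            simp only [LTree.labels, List.mem_cons]
            exact Or.inr (LTree.labels_subset cs t ht t.root (LTree.root_mem_labels t)))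
        rw [← hr, ← hv]; exact h2 t ht
      · exact LTree.colorsList_congr cs
          (fun w hw => h w (by simp only [LTree.labels, List.mem_cons]; exact Or.inr hw)) h3

theorem LTree.colorsList_congr {V : Type} {L : V → Finset ℕ} {c c' : V → ℕ} :
    ∀ l : List (LTree V), (∀ v ∈ LTree.labelsList l, c v = c' v) →
      LTree.ColorsList L c l → LTree.ColorsList L c' l
  | [] => fun _ _ => trivial
  | t :: ts => fun h hc => by
      obtain ⟨h1, h2⟩ := hc
      refine ⟨LTree.colors_congr t (fun v hv => h v ?_) h1,
        LTree.colorsList_congr ts (fun v hv => h v ?_) h2⟩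
      · simp only [LTree.labelsList, List.mem_append]; exact Or.inl hv
      · simp only [LTree.labelsList, List.mem_append]; exact Or.inr hv
end

/-- Let `T` be the tree rooted at `r` with children subtrees `cs1 ++ u :: cs2`,
where `u` is the heavy child, and suppose `c₀` is the unique colour in `L r`
achievable as the colour of `r` in an `L`-colouring of `T − T_u`.  Then `T`
admits an `L`-colouring iff `T_u` admits an `L`-colouring in which the root of
`u` does not receive colour `c₀`. -/
theorem critical_reduction (V : Type) (r : V) (cs1 cs2 : List (LTree V))
    (u : LTree V) (L : V → Finset ℕ)
    (hnodup : (LTree.node r (cs1 ++ u :: cs2)).labels.Nodup)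
    (hheavy : LHeavyIdx (cs1 ++ u :: cs2) ⟨cs1.length, by simp⟩)
    (c₀ : ℕ) (hc₀ : c₀ ∈ L r)
    (hach : ∃ c, LTree.Colors L c (LTree.node r (cs1 ++ cs2)) ∧ c r = c₀)
    (huniq : ∀ c, LTree.Colors L c (LTree.node r (cs1 ++ cs2)) → c r = c₀) :
    (∃ c, LTree.Colors L c (LTree.node r (cs1 ++ u :: cs2))) ↔
      (∃ c, LTree.Colors L c u ∧ c u.root ≠ c₀) := by
  classical
  constructor
  · rintro ⟨c, h1, h2, h3⟩
    rw [LTree.colorsList_iff_forall] at h3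
    have hmem : ∀ t ∈ cs1 ++ cs2, t ∈ cs1 ++ u :: cs2 := by
      intro t ht
      simp only [List.mem_append, List.mem_cons] at ht ⊢
      tauto
    have hc : LTree.Colors L c (LTree.node r (cs1 ++ cs2)) := by
      refine ⟨h1, fun t ht => h2 t (hmem t ht), ?_⟩
      rw [LTree.colorsList_iff_forall]
      exact fun t ht => h3 t (hmem t ht)
    have hr : c r = c₀ := huniq c hc
    have hu : u ∈ cs1 ++ u :: cs2 := by simp
    exact ⟨c, h3 u hu, by rw [← hr]; exact h2 u hu⟩
  · rintro ⟨c', hcu, hne⟩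
    obtain ⟨c, hc, hcr⟩ := hach
    obtain ⟨h1, h2, h3⟩ := hc
    rw [LTree.colorsList_iff_forall] at h3
    set d : V → ℕ := fun v => if v ∈ u.labels then c' v else c v with hd
    -- nodup facts
    simp only [LTree.labels, LTree.labelsList_append, LTree.labelsList,
      List.nodup_cons, List.mem_append] at hnodup
    obtain ⟨hr_notmem, hnd⟩ := hnodup
    have hrn : r ∉ u.labels := fun h => hr_notmem (Or.inr (Or.inl h))
    have hdisj : ∀ t ∈ cs1 ++ cs2, ∀ v ∈ t.labels, v ∉ u.labels := by
      intro t ht v hv hvu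
      have hnd' := hnd
      rw [List.nodup_append] at hnd'
      obtain ⟨_, hnd2, hdisj1⟩ := hnd'
      rw [List.nodup_append] at hnd2
      obtain ⟨_, _, hdisj2⟩ := hnd2
      rcases List.mem_append.1 ht with ht | ht
      · exact hdisj1 v (LTree.labels_subset cs1 t ht v hv) v
          (List.mem_append.2 (Or.inl hvu)) rfl
      · exact hdisj2 v hvu v (LTree.labels_subset cs2 t ht v hv) rfl
    have hdr : d r = c₀ := by simp only [hd, if_neg hrn]; exact hcr
    refine ⟨d, ?_, ?_, ?_⟩
    · rw [hdr]; exact hc₀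
    · intro t ht
      rw [hdr]
      rcases List.mem_append.1 ht with ht' | ht'
      · have : d t.root = c t.root := by
          simp only [hd, if_neg (hdisj t (List.mem_append.2 (Or.inl ht')) t.root
            (LTree.root_mem_labels t))]
        rw [this, ← hcr]
        exact h2 t (List.mem_append.2 (Or.inl ht'))
      · rcases List.mem_cons.1 ht' with rfl | ht''
        · have : d t.root = c' t.root := by
            simp only [hd, if_pos (LTree.root_mem_labels t)]
          rw [this]; exact hne
        · have : d t.root = c t.root := by
            simp only [hd, if_neg (hdisj t (List.mem_append.2 (Or.inr ht'')) t.root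
              (LTree.root_mem_labels t))]
          rw [this, ← hcr]
          exact h2 t (List.mem_append.2 (Or.inr ht''))
    · rw [LTree.colorsList_iff_forall]
      intro t ht
      rcases List.mem_append.1 ht with ht' | ht'
      · exact LTree.colors_congr t
          (fun v hv => by simp only [hd, if_neg (hdisj t (List.mem_append.2 (Or.inl ht')) v hv)])
          (h3 t (List.mem_append.2 (Or.inl ht')))
      · rcases List.mem_cons.1 ht' with rfl | ht''
        · exact LTree.colors_congr t (fun v hv => by simp only [hd, if_pos hv]) hcu
        · exact LTree.colors_congr t
            (fun v hv => by simp only [hd, if_neg (hdisj t (List.mem_append.2 (Or.inr ht'')) v hv)])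
            (h3 t (List.mem_append.2 (Or.inr ht'')))
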